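/- Let Ω be a measure space with finite measure, ρ ≥ 0 measurable with ∫ ln(ρ)(ρ − 1) dμ ≤ C₁ ∫|ρ − 1| dμ + C₂ for positive constants C₁, C₂. Then there exists a constant c depending only on C₁, C₂ and μ(Ω) such that ∫ |ρ − 1| dμ ≤ c. -/

import Mathlib

open MeasureTheory

lemma pointwise_bound (C₁ t : ℝ) (hC : 0 < C₁) (ht : 0 ≤ t) :
    |t - 1| ≤ (1 / (2 * C₁)) * (Real.log t * (t - 1)) + (Real.exp (2 * C₁) + 1) := by
  set M := Real.exp (2 * C₁) with hM
  have hM1 : 1 < M := by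
    have := Real.add_one_le_exp (2 * C₁); linarith
  have hnn : 0 ≤ Real.log t * (t - 1) := by
    rcases le_or_gt 1 t with h | h
    · exact mul_nonneg (Real.log_nonneg h) (by linarith)
    · nlinarith [Real.log_nonpos ht h.le]
  rcases le_or_gt t M with h | h
  · have h0 : 0 ≤ (1 / (2 * C₁)) * (Real.log t * (t - 1)) :=
      mul_nonneg (by positivity) hnn
    have habs : |t - 1| ≤ M + 1 := abs_le.mpr ⟨by linarith, by linarith⟩
    linarith
  · have ht1 : 1 < t := lt_trans hM1 h
    have hlog : 2 * C₁ ≤ Real.log t := by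
      calc 2 * C₁ = Real.log (Real.exp (2 * C₁)) := (Real.log_exp _).symm
        _ ≤ Real.log t := Real.log_le_log (Real.exp_pos _) h.le
    have habs : |t - 1| = t - 1 := abs_of_nonneg (by linarith)
    rw [habs]
    have h2 : 2 * C₁ * (t - 1) ≤ Real.log t * (t - 1) :=
      mul_le_mul_of_nonneg_right hlog (by linarith)
    have h3 : t - 1 ≤ (1 / (2 * C₁)) * (Real.log t * (t - 1)) := by
      rw [one_div, inv_mul_eq_div, le_div_iff₀ (by positivity)]
      nlinarith
    linarith

theorem stmt_7 :
    ∃ c : ℝ → ℝ → ℝ → ℝ,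
      ∀ (Ω : Type) (_ : MeasurableSpace Ω) (μ : Measure Ω), IsFiniteMeasure μ →
        ∀ (ρ : Ω → ℝ) (C₁ C₂ : ℝ), 0 < C₁ → 0 < C₂ →
          Measurable ρ → (∀ x, 0 ≤ ρ x) →
          Integrable (fun x => |ρ x - 1|) μ →
          Integrable (fun x => Real.log (ρ x) * (ρ x - 1)) μ →
          (∫ x, Real.log (ρ x) * (ρ x - 1) ∂μ ≤
            C₁ * ∫ x, |ρ x - 1| ∂μ + C₂) →
          ∫ x, |ρ x - 1| ∂μ ≤ c C₁ C₂ (μ Set.univ).toReal := by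
  refine ⟨fun C₁ C₂ V => C₂ / C₁ + 2 * (Real.exp (2 * C₁) + 1) * V, ?_⟩
  intro Ω _ μ hfin ρ C₁ C₂ hC₁ hC₂ hmeas hnn hint1 hint2 hbound
  set I := ∫ x, |ρ x - 1| ∂μ with hI
  set L := ∫ x, Real.log (ρ x) * (ρ x - 1) ∂μ with hL
  set M := Real.exp (2 * C₁) with hM
  set V := (μ Set.univ).toReal with hV
  have hV0 : 0 ≤ V := ENNReal.toReal_nonneg
  have hmono : I ≤ ∫ x, ((1 / (2 * C₁)) * (Real.log (ρ x) * (ρ x - 1)) + (M + 1)) ∂μ := by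
    apply integral_mono hint1 ((hint2.const_mul _).add (integrable_const _))
    intro x
    exact pointwise_bound C₁ (ρ x) hC₁ (hnn x)
  have hsplit : ∫ x, ((1 / (2 * C₁)) * (Real.log (ρ x) * (ρ x - 1)) + (M + 1)) ∂μ
      = (1 / (2 * C₁)) * L + (M + 1) * V := by
    rw [integral_add (hint2.const_mul _) (integrable_const _), integral_const_mul,
      integral_const, measureReal_def, smul_eq_mul]
    ring
  rw [hsplit] at hmono
  -- multiply through by 2*C₁
  have e1 : 2 * C₁ * ((1 / (2 * C₁)) * L + (M + 1) * V)
      = L + 2 * C₁ * (M + 1) * V := by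
    field_simp
  have key : 2 * C₁ * I ≤ L + 2 * C₁ * (M + 1) * V := by
    calc 2 * C₁ * I ≤ 2 * C₁ * ((1 / (2 * C₁)) * L + (M + 1) * V) :=
          mul_le_mul_of_nonneg_left hmono (by positivity)
      _ = L + 2 * C₁ * (M + 1) * V := e1
  have key2 : C₁ * I ≤ C₂ + 2 * C₁ * (M + 1) * V := by linarith
  have hdiv : I ≤ (C₂ + 2 * C₁ * (M + 1) * V) / C₁ := by
    rw [le_div_iff₀ hC₁]; linarith
  have heq : (C₂ + 2 * C₁ * (M + 1) * V) / C₁ = C₂ / C₁ + 2 * (M + 1) * V := by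
    have h' : 2 * C₁ * (M + 1) * V = (2 * (M + 1) * V) * C₁ := by ring
    rw [add_div, h', mul_div_cancel_right₀ _ hC₁.ne']
  linarith [heq ▸ hdiv]
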